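/- Suppose S ⊆ S' are saturated multiplicatively closed subsets of R, S splits M, S ∩ Z(M) = ∅, and S' \ Ann(M) is compactly S-atomic (as a subset of the R-module R). Let 0 ≠ m ∈ M, let β be one of: primitive, strongly primitive, very strongly primitive, and let m = s·n be a compact S-atomic factorization of m (s ∈ S, n ∈ M S-primitive). Then the image m/1 of m in the localized R_S-module M_S is T-β (with respect to T = S^{-1}S') if and only if n is S'-β in M. -/

import Mathlib

namespace FactorizationPaper

variable {R : Type*} [CommRing R]

/-- `S` is a saturated multiplicatively closed subset of `R`:
it contains `1`, is closed under multiplication, and `x*y ∈ S` implies `x ∈ S` and `y ∈ S`. -/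
def Saturated (S : Set R) : Prop :=
  1 ∈ S ∧ (∀ x ∈ S, ∀ y ∈ S, x * y ∈ S) ∧ ∀ x y : R, x * y ∈ S → x ∈ S ∧ y ∈ S

/-- The submonoid of `R` associated to a saturated multiplicatively closed set. -/
def Saturated.submonoid {S : Set R} (hS : Saturated S) : Submonoid R where
  carrier := S
  one_mem' := hS.1
  mul_mem' := fun {a b} ha hb => hS.2.1 a ha b hb

section ElementDefs

variable (S : Set R) {N : Type*} [AddCommGroup N] [Module R N]

/-- `m ∼^S n` : `m` and `n` are S-associates. -/
def SAssoc (m n : N) : Prop := (∃ s ∈ S, m = s • n) ∧ (∃ s ∈ S, n = s • m)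

/-- `m ≈^S n` : `m` and `n` are S-strong associates. -/
def SStrongAssoc (m n : N) : Prop := ∃ u : R, IsUnit u ∧ u ∈ S ∧ m = u • n

/-- `m ≅^S n` : `m` and `n` are S-very strong associates. -/
def SVeryStrongAssoc (m n : N) : Prop :=
  SAssoc S m n ∧ ((m = 0 ∧ n = 0) ∨ ∀ s ∈ S, m = s • n → IsUnit s)

/-- `m` is S-primitive. -/
def SPrimitive (m : N) : Prop := ∀ s ∈ S, ∀ n : N, m = s • n → SAssoc S n m

/-- `m` is S-strongly primitive. -/
def SStronglyPrimitive (m : N) : Prop := ∀ s ∈ S, ∀ n : N, m = s • n → SStrongAssoc S n m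

/-- `m` is S-very strongly primitive. -/
def SVeryStronglyPrimitive (m : N) : Prop := ∀ s ∈ S, ∀ n : N, m = s • n → SVeryStrongAssoc S n m

/-- the three kinds of S-primitivity, indexed by `Fin 3` :
`0` = primitive, `1` = strongly primitive, `2` = very strongly primitive. -/
def PrimOf (k : Fin 3) (m : N) : Prop :=
  match k with
  | 0 => SPrimitive S m
  | 1 => SStronglyPrimitive S m
  | 2 => SVeryStronglyPrimitive S m

/-- `m = s • n` is a compact S-atomic factorization of `m`. -/
def IsCompactFactorization (m : N) (s : R) (n : N) : Prop :=
  s ∈ S ∧ SPrimitive S n ∧ m = s • n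

/-- `m = s₁ ⋯ s_k • n` (with the `sᵢ` the members of the list `l`, nonunits in `S`)
is an S-factorization of `m`, of length `l.length`. -/
def IsSFactorization (m : N) (l : List R) (n : N) : Prop :=
  (∀ s ∈ l, s ∈ S ∧ ¬ IsUnit s) ∧ m = l.prod • n

end ElementDefs

/-- `a ∼ b` : associates in `R` (i.e. S-associates with `S = R`, in `R` as an `R`-module). -/
def Assoc (a b : R) : Prop := SAssoc (Set.univ : Set R) a b

/-- `a ≈ b` : strong associates in `R`. -/
def StrongAssoc (a b : R) : Prop := SStrongAssoc (Set.univ : Set R) a b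

/-- `a ≅ b` : very strong associates in `R`. -/
def VeryStrongAssoc (a b : R) : Prop := SVeryStrongAssoc (Set.univ : Set R) a b

/-- `a` is irreducible. -/
def Irred (a : R) : Prop := ¬ IsUnit a ∧ ∀ b c : R, a = b * c → Assoc a b ∨ Assoc a c

/-- `a` is strongly irreducible. -/
def StrongIrred (a : R) : Prop :=
  ¬ IsUnit a ∧ ∀ b c : R, a = b * c → StrongAssoc a b ∨ StrongAssoc a c

/-- `a` is very strongly irreducible. -/
def VeryStrongIrred (a : R) : Prop :=
  ¬ IsUnit a ∧ ∀ b c : R, a = b * c → VeryStrongAssoc a b ∨ VeryStrongAssoc a c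

/-- the three kinds of irreducibility, indexed by `Fin 3` :
`0` = irreducible, `1` = strongly irreducible, `2` = very strongly irreducible. -/
def IrredOf (k : Fin 3) (a : R) : Prop :=
  match k with
  | 0 => Irred a
  | 1 => StrongIrred a
  | 2 => VeryStrongIrred a

section ElementDefs2

variable (S : Set R) {N : Type*} [AddCommGroup N] [Module R N]

/-- `m = s₁ ⋯ s_k • n` is an S-atomic factorization
(each `sᵢ` irreducible and in `S`, `n` S-primitive). -/
def IsSAtomicFactorization (m : N) (l : List R) (n : N) : Prop :=
  IsSFactorization S m l n ∧ (∀ s ∈ l, Irred s) ∧ SPrimitive S n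

/-- an (α, β)-S-factorization: each `sᵢ` is α (a kind of irreducible)
and `n` is S-β (a kind of S-primitive). -/
def IsABFactorization (kα kβ : Fin 3) (m : N) (l : List R) (n : N) : Prop :=
  IsSFactorization S m l n ∧ (∀ s ∈ l, IrredOf kα s) ∧ PrimOf S kβ n

/-- Isomorphism of S-atomic factorizations: same length, S-associate primitive parts,
and the irreducible parts match up to permutation and associates. -/
def FactorIso (l : List R) (n : N) (l' : List R) (n' : N) : Prop :=
  l.length = l'.length ∧ SAssoc S n n' ∧
    ∃ l'' : List R, l'.Perm l'' ∧ List.Forall₂ Assoc l l''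

end ElementDefs2

section SetDefs

variable (S : Set R) {N : Type*} [AddCommGroup N] [Module R N]

/-- `E ⊆ N` is compactly S-atomic. -/
def CompactlySAtomic (E : Set N) : Prop :=
  ∀ m ∈ E, m ≠ 0 → ∃ s n, IsCompactFactorization S m s n

/-- `E ⊆ N` is semi-S-factorable. -/
def SemiSFactorable (E : Set N) : Prop :=
  CompactlySAtomic S E ∧ ∀ m ∈ E, m ≠ 0 → ∀ s n s' n',
    IsCompactFactorization S m s n → IsCompactFactorization S m s' n' → Assoc s s'

/-- `E ⊆ N` is S-factorable. -/
def SFactorable (E : Set N) : Prop :=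
  SemiSFactorable S E ∧ ∀ m ∈ E, m ≠ 0 → ∀ s n s' n',
    IsCompactFactorization S m s n → IsCompactFactorization S m s' n' → SAssoc S n n'

/-- `S` splits `E ⊆ N`. -/
def Splits (E : Set N) : Prop :=
  SemiSFactorable S E ∧
    ∀ r : R, SPrimitive S r → ∀ m : N, SPrimitive S m →
      r • m ≠ 0 → r • m ∈ E → SPrimitive S (r • m)

end SetDefs

/-- The set of zero divisors of the module `M` in `R`. -/
def ZDiv (R : Type*) [CommRing R] (M : Type*) [AddCommGroup M] [Module R M] : Set R :=
  {r : R | ∃ m : M, m ≠ 0 ∧ r • m = 0}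

/-- The annihilator of `M` in `R`, as a set. -/
def AnnSet (R : Type*) [CommRing R] (M : Type*) [AddCommGroup M] [Module R M] : Set R :=
  {r : R | ∀ m : M, r • m = 0}

/-- The annihilator of `M` in `R`, as an ideal. -/
def AnnIdeal (R : Type*) [CommRing R] (M : Type*) [AddCommGroup M] [Module R M] : Ideal R where
  carrier := AnnSet R M
  zero_mem' := fun m => zero_smul R m
  add_mem' := fun {a b} ha hb m => by
    rw [add_smul, ha m, hb m, add_zero]
  smul_mem' := fun c x hx m => by
    rw [smul_eq_mul, mul_smul, hx m, smul_zero]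

section ModuleProps

variable (S : Set R) (N : Type*) [AddCommGroup N] [Module R N]

/-- `N` is S-présimplifiable. -/
def SPresimplifiable : Prop := ∀ s ∈ S, ∀ m : N, s • m = m → IsUnit s ∨ m = 0

/-- `N` is S-atomic. -/
def SAtomicModule : Prop := ∀ m : N, m ≠ 0 → ∃ l n, IsSAtomicFactorization S m l n

/-- `N` is (α, β)-S-atomic. -/
def ABAtomicModule (kα kβ : Fin 3) : Prop :=
  ∀ m : N, m ≠ 0 → ∃ l n, IsABFactorization S kα kβ m l n

/-- `N` is an S-UFM. -/
def SUFM : Prop := SAtomicModule S N ∧ ∀ m : N, m ≠ 0 → ∀ l n l' n',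
  IsSAtomicFactorization S m l n → IsSAtomicFactorization S m l' n' → FactorIso S l n l' n'

/-- `N` is an S-FFM. -/
def SFFM : Prop := SAtomicModule S N ∧ ∀ m : N, m ≠ 0 →
  ∃ Fs : Set (List R × N), Fs.Finite ∧
    ∀ l n, IsSAtomicFactorization S m l n → ∃ p ∈ Fs, FactorIso S l n p.1 p.2

/-- `N` is an S-BFM. -/
def SBFM : Prop := ∀ m : N, m ≠ 0 → ∃ B : ℕ,
  ∀ l n, IsSFactorization S m l n → l.length ≤ B

/-- `N` is an S-HFM. -/
def SHFM : Prop := SAtomicModule S N ∧ ∀ m : N, m ≠ 0 → ∀ l n l' n',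
  IsSAtomicFactorization S m l n → IsSAtomicFactorization S m l' n' → l.length = l'.length

end ModuleProps

section InE

variable (E : Set R)

/-- `R` is présimplifiable in `E`. -/
def PresimpIn : Prop := ∀ a ∈ E, a ≠ 0 → ¬ IsUnit a → ∀ r : R, a = r * a → IsUnit r ∨ a = 0

/-- `R` is atomic in `E`. -/
def AtomicIn : Prop := ∀ a ∈ E, a ≠ 0 → ¬ IsUnit a →
  ∃ l n, IsSAtomicFactorization (Set.univ : Set R) a l n

/-- `R` has unique factorization in `E`. -/
def UFIn : Prop := AtomicIn E ∧ ∀ a ∈ E, a ≠ 0 → ¬ IsUnit a → ∀ l n l' n',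
  IsSAtomicFactorization (Set.univ : Set R) a l n →
  IsSAtomicFactorization (Set.univ : Set R) a l' n' →
  FactorIso (Set.univ : Set R) l n l' n'

/-- `R` has finite factorization in `E`. -/
def FFIn : Prop := AtomicIn E ∧ ∀ a ∈ E, a ≠ 0 → ¬ IsUnit a →
  ∃ Fs : Set (List R × R), Fs.Finite ∧ ∀ l n,
    IsSAtomicFactorization (Set.univ : Set R) a l n →
      ∃ p ∈ Fs, FactorIso (Set.univ : Set R) l n p.1 p.2

/-- `R` is half factorial in `E`. -/
def HFIn : Prop := AtomicIn E ∧ ∀ a ∈ E, a ≠ 0 → ¬ IsUnit a → ∀ l n l' n',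
  IsSAtomicFactorization (Set.univ : Set R) a l n →
  IsSAtomicFactorization (Set.univ : Set R) a l' n' → l.length = l'.length

/-- `R` has bounded factorization in `E`. -/
def BFIn : Prop := ∀ a ∈ E, a ≠ 0 → ¬ IsUnit a →
  ∃ B : ℕ, ∀ l n, IsSFactorization (Set.univ : Set R) a l n → l.length ≤ B

end InE

/-- The set `T = S⁻¹S'` in the localization `R_S`. -/
def locT {S : Set R} (hS : Saturated S) (S' : Set R) : Set (Localization hS.submonoid) :=
  {x | ∃ s' ∈ S', ∃ t : hS.submonoid, x = Localization.mk s' t}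

section DomainDefs

variable (D : Type*) [CommRing D]

/-- two lists of ring elements agree up to order and associates. -/
def ListAssociated (l l' : List D) : Prop :=
  ∃ l'' : List D, l'.Perm l'' ∧ List.Forall₂ Associated l l''

/-- `D` is atomic: every nonzero nonunit is a finite product of irreducibles. -/
def DomAtomic : Prop := ∀ x : D, x ≠ 0 → ¬ IsUnit x →
  ∃ l : List D, (∀ a ∈ l, Irreducible a) ∧ x = l.prod

/-- `D` is a bounded factorization domain. -/
def DomBFD : Prop := ∀ x : D, x ≠ 0 → ¬ IsUnit x →
  ∃ B : ℕ, ∀ l : List D, (∀ a ∈ l, ¬ IsUnit a) → x = l.prod → l.length ≤ B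

/-- `D` is a half factorial domain. -/
def DomHFD : Prop := DomAtomic D ∧ ∀ x : D, x ≠ 0 → ¬ IsUnit x →
  ∀ l l' : List D, (∀ a ∈ l, Irreducible a) → x = l.prod →
    (∀ a ∈ l', Irreducible a) → x = l'.prod → l.length = l'.length

/-- `D` is a finite factorization domain. -/
def DomFFD : Prop := DomAtomic D ∧ ∀ x : D, x ≠ 0 → ¬ IsUnit x →
  ∃ Fs : Set (List D), Fs.Finite ∧ ∀ l : List D, (∀ a ∈ l, Irreducible a) → x = l.prod →
    ∃ l' ∈ Fs, ListAssociated D l l'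

/-- `D` is a unique factorization domain. -/
def DomUFD : Prop := DomAtomic D ∧ ∀ x : D, x ≠ 0 → ¬ IsUnit x →
  ∀ l l' : List D, (∀ a ∈ l, Irreducible a) → x = l.prod →
    (∀ a ∈ l', Irreducible a) → x = l'.prod → ListAssociated D l l'

end DomainDefs

section AXBXdefs

variable (B : Type*) [CommRing B] (A : Subring B)

/-- The ring `R = A + X·B[X]`, as a subring of `B[X]`. -/
def AXBX : Subring (Polynomial B) where
  carrier := {f | f.coeff 0 ∈ A}
  zero_mem' := by simp only [Set.mem_setOf_eq, Polynomial.coeff_zero]; exact zero_mem A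
  one_mem' := by
    simp only [Set.mem_setOf_eq, Polynomial.coeff_one, if_pos rfl]
    exact one_mem A
  add_mem' := fun {f g} hf hg => by
    simp only [Set.mem_setOf_eq, Polynomial.coeff_add] at *
    exact add_mem hf hg
  neg_mem' := fun {f} hf => by
    simp only [Set.mem_setOf_eq, Polynomial.coeff_neg] at *
    exact neg_mem hf
  mul_mem' := fun {f g} hf hg => by
    simp only [Set.mem_setOf_eq, Polynomial.mul_coeff_zero] at *
    exact mul_mem hf hg

/-- The saturated multiplicatively closed subset `S = (U(B) ∩ A) ∪ {u·Xⁿ : u ∈ U(B), n ≥ 1}`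
of `R = A + X·B[X]`. -/
def Sset : Set (AXBX B A) :=
  {f | (∃ u : B, IsUnit u ∧ u ∈ A ∧ (f : Polynomial B) = Polynomial.C u) ∨
       (∃ u : B, IsUnit u ∧ ∃ n : ℕ, 1 ≤ n ∧
          (f : Polynomial B) = Polynomial.C u * Polynomial.X ^ n)}

/-- The saturated multiplicatively closed subset `S₀ = U(B) ∩ A` of `A`. -/
def S0set : Set A := {a : A | IsUnit (a : B)}

end AXBXdefs


section Statement7Aux

variable {R : Type*} [CommRing R] {M : Type*} [AddCommGroup M] [Module R M]
variable {S S' : Set R}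

lemma reg_of_disjoint (hZM : S ∩ ZDiv R M = ∅) {s : R} (hs : s ∈ S) {x : M}
    (h : s • x = 0) : x = 0 := by
  by_contra hx
  have : s ∈ S ∩ ZDiv R M := ⟨hs, ⟨x, hx, h⟩⟩
  rw [hZM] at this
  exact this

lemma smul_cancel' (hZM : S ∩ ZDiv R M = ∅) {s : R} (hs : s ∈ S) {x y : M}
    (h : s • x = s • y) : x = y := by
  have h0 : s • (x - y) = 0 := by rw [smul_sub, h, sub_self]
  exact sub_eq_zero.mp (reg_of_disjoint hZM hs h0)

lemma mk_eq_iff' (hS : Saturated S) (hZM : S ∩ ZDiv R M = ∅) {x y : M}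
    {s t : hS.submonoid} :
    LocalizedModule.mk x s = LocalizedModule.mk y t ↔ (t : R) • x = (s : R) • y := by
  rw [LocalizedModule.mk_eq]
  constructor
  · rintro ⟨u, hu⟩
    have hu' : (u : R) • ((t : R) • x) = (u : R) • ((s : R) • y) := by
      simpa [Submonoid.smul_def] using hu
    exact smul_cancel' hZM u.2 hu'
  · intro h
    exact ⟨1, by simp [Submonoid.smul_def, h]⟩

lemma mk_one_ne_zero (hS : Saturated S) (hZM : S ∩ ZDiv R M = ∅) {n : M} (hn0 : n ≠ 0) :
    LocalizedModule.mk n (1 : hS.submonoid) ≠ 0 := by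
  intro h0
  apply hn0
  have h1 : LocalizedModule.mk n (1 : hS.submonoid) = LocalizedModule.mk (0 : M) 1 := by
    rw [h0, LocalizedModule.zero_mk]
  rw [mk_eq_iff' hS hZM] at h1
  simpa using h1

lemma isUnit_mk_of_mem (hS : Saturated S) {a : R} (ha : a ∈ S) (s : hS.submonoid) :
    IsUnit (Localization.mk a s) := by
  refine isUnit_iff_exists_inv.mpr ⟨Localization.mk (s : R) ⟨a, ha⟩, ?_⟩
  rw [Localization.mk_mul, ← Localization.mk_one, Localization.mk_eq_mk_iff,
    Localization.r_iff_exists]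
  exact ⟨1, by push_cast; ring⟩

lemma isUnit_mk_one_of_isUnit (hS : Saturated S) {r : R} (hr : IsUnit r) :
    IsUnit (Localization.mk r (1 : hS.submonoid)) := by
  obtain ⟨z, hz⟩ := hr.exists_right_inv
  refine isUnit_iff_exists_inv.mpr ⟨Localization.mk z 1, ?_⟩
  rw [Localization.mk_mul, hz, one_mul]
  exact Localization.mk_one

lemma mem_of_isUnit_mk (hS : Saturated S) {a : R} {s : hS.submonoid}
    (h : IsUnit (Localization.mk a s)) : a ∈ S := by
  obtain ⟨z, hz⟩ := isUnit_iff_exists_inv.mp h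
  obtain ⟨⟨b, t⟩, rfl⟩ : ∃ p : R × hS.submonoid, z = Localization.mk p.1 p.2 :=
    Localization.induction_on z fun p => ⟨p, rfl⟩
  rw [Localization.mk_mul, ← Localization.mk_one, Localization.mk_eq_mk_iff,
    Localization.r_iff_exists] at hz
  obtain ⟨c, hc⟩ := hz
  push_cast at hc
  have hmem : ((c : R) * a) * b ∈ S := by
    have he : ((c : R) * a) * b = (c : R) * ((s : R) * (t : R)) := by linear_combination hc
    rw [he]
    exact hS.2.1 _ c.2 _ (hS.2.1 _ s.2 _ t.2)
  exact (hS.2.2 (c : R) a (hS.2.2 _ b hmem).1).2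

lemma mk1_smul_mk1 (hS : Saturated S) (a : R) (y : M) :
    Localization.mk a (1 : hS.submonoid) • LocalizedModule.mk y (1 : hS.submonoid) =
      LocalizedModule.mk (a • y) (1 : hS.submonoid) := by
  rw [LocalizedModule.mk_smul_mk, one_mul]

/-- Lemma A: extracting a module relation from `s₁ • x = a • n`. -/
lemma lemA (hS : Saturated S) (hS' : Saturated S') (hSS' : S ⊆ S')
    (hsplit : Splits S (Set.univ : Set M)) (hZM : S ∩ ZDiv R M = ∅)
    (hcompact : CompactlySAtomic S (S' \ AnnSet R M))
    {n : M} (hn : SPrimitive S n)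
    {s₁ a : R} {x : M} (hs₁ : s₁ ∈ S) (ha : a ∈ S') (hx0 : x ≠ 0)
    (h : s₁ • x = a • n) :
    ∃ e ∈ S', a = s₁ * e ∧ x = e • n := by
  have hsx : s₁ • x ≠ 0 := fun h0 => hx0 (reg_of_disjoint hZM hs₁ h0)
  have han : a • n ≠ 0 := h ▸ hsx
  have haAnn : a ∉ AnnSet R M := fun hA => han (hA n)
  have ha0 : a ≠ 0 := by rintro rfl; exact han (zero_smul R n)
  obtain ⟨σ, r, hσ, hr, har⟩ := hcompact a ⟨ha, haAnn⟩ ha0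
  rw [smul_eq_mul] at har
  have hrn0 : r • n ≠ 0 := fun h0 => han (by rw [har, mul_smul, h0, smul_zero])
  have hrn : SPrimitive S (r • n) := hsplit.2 r hr n hn hrn0 trivial
  obtain ⟨τ, v, hτ, hv, hxv⟩ := hsplit.1.1 x trivial hx0
  have f1 : IsCompactFactorization S (s₁ • x) σ (r • n) :=
    ⟨hσ, hrn, by rw [h, har, mul_smul]⟩
  have f2 : IsCompactFactorization S (s₁ • x) (s₁ * τ) v :=
    ⟨hS.2.1 _ hs₁ _ hτ, hv, by rw [hxv, smul_smul]⟩
  obtain ⟨⟨c, -, hc⟩, -⟩ := hsplit.1.2 (s₁ • x) trivial hsx σ (r • n) (s₁ * τ) v f1 f2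
  rw [smul_eq_mul] at hc
  have hcS : c ∈ S := (hS.2.2 c (s₁ * τ) (hc ▸ hσ)).1
  have hrS' : r ∈ S' := (hS'.2.2 σ r (har ▸ ha)).2
  have hscal : a = s₁ * (c * τ * r) := by rw [har, hc]; ring
  refine ⟨c * τ * r, hS'.2.1 _ (hSS' (hS.2.1 _ hcS _ hτ)) _ hrS', hscal, ?_⟩
  exact smul_cancel' hZM hs₁ (by rw [h, hscal, mul_smul])

/-- the key unit trick: if `n = (e * a') • n` with `e ∈ S`, then `e` is a unit. -/
lemma key_unit (hS : Saturated S) (hsplit : Splits S (Set.univ : Set M))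
    {n : M} (hn : SPrimitive S n) (hn0 : n ≠ 0) {e : R} (a' : R) (he : e ∈ S)
    (h : n = (e * a') • n) : IsUnit e := by
  obtain ⟨⟨α, hα, hαe⟩, -⟩ := hn e he (a' • n) (by nth_rewrite 1 [h]; rw [mul_smul])
  have h2 : n = (e * α) • n := by nth_rewrite 1 [h]; rw [mul_smul, mul_smul, hαe]
  have f1 : IsCompactFactorization S n 1 n := ⟨hS.1, hn, (one_smul R n).symm⟩
  have f2 : IsCompactFactorization S n (e * α) n := ⟨hS.2.1 _ he _ hα, hn, h2⟩
  obtain ⟨⟨p, -, hp⟩, -⟩ := hsplit.1.2 n trivial hn0 1 n (e * α) n f1 f2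
  rw [smul_eq_mul] at hp
  exact isUnit_of_mul_isUnit_left
    (IsUnit.of_mul_eq_one (a := e * α) p (by rw [hp]; ring))

/-- shared decomposition for the backward direction. -/
lemma backCore (hS : Saturated S) (hS' : Saturated S') (hSS' : S ⊆ S')
    (hsplit : Splits S (Set.univ : Set M)) (hZM : S ∩ ZDiv R M = ∅)
    (hcompact : CompactlySAtomic S (S' \ AnnSet R M))
    {n : M} (hn : SPrimitive S n) (hn0 : n ≠ 0)
    {t : Localization hS.submonoid} {x : LocalizedModule hS.submonoid M}
    (ht : t ∈ locT hS S') (hx : LocalizedModule.mk n 1 = t • x) :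
    ∃ (v : M) (τ : R) (s₂ : hS.submonoid) (e : R), τ ∈ S ∧ e ∈ S' ∧ SPrimitive S v ∧
      v ≠ 0 ∧ n = e • v ∧ x = LocalizedModule.mk (τ • v) s₂ := by
  obtain ⟨a, ha, s₁, rfl⟩ := ht
  induction x using LocalizedModule.induction_on with
  | h w s₂ =>
  rw [LocalizedModule.mk_smul_mk, mk_eq_iff' hS hZM] at hx
  have key : ((s₁ : R) * (s₂ : R)) • n = a • w := by
    simpa [Submonoid.coe_mul] using hx
  have hpS : (s₁ : R) * (s₂ : R) ∈ S := hS.2.1 _ s₁.2 _ s₂.2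
  have hpn0 : ((s₁ : R) * (s₂ : R)) • n ≠ 0 := fun h0 => hn0 (reg_of_disjoint hZM hpS h0)
  have haw0 : a • w ≠ 0 := key ▸ hpn0
  have hw0 : w ≠ 0 := fun h0 => haw0 (by rw [h0, smul_zero])
  have haAnn : a ∉ AnnSet R M := fun hA => haw0 (hA w)
  have ha0 : a ≠ 0 := by rintro rfl; exact haw0 (zero_smul R w)
  obtain ⟨σ, r, hσ, hr, har⟩ := hcompact a ⟨ha, haAnn⟩ ha0
  rw [smul_eq_mul] at har
  obtain ⟨τ, v, hτ, hv, hwv⟩ := hsplit.1.1 w trivial hw0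
  have hrv0 : r • v ≠ 0 := by
    intro h0
    apply haw0
    have h1 : a • w = (σ * τ) • (r • v) := by
      rw [har, hwv, smul_smul, smul_smul]
      congr 1; ring
    rw [h1, h0, smul_zero]
  have hrv : SPrimitive S (r • v) := hsplit.2 r hr v hv hrv0 trivial
  have f1 : IsCompactFactorization S (((s₁ : R) * (s₂ : R)) • n) ((s₁ : R) * (s₂ : R)) n :=
    ⟨hpS, hn, rfl⟩
  have f2 : IsCompactFactorization S (((s₁ : R) * (s₂ : R)) • n) (σ * τ) (r • v) := by
    refine ⟨hS.2.1 _ hσ _ hτ, hrv, ?_⟩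
    rw [key, har, hwv, smul_smul, smul_smul]
    congr 1; ring
  obtain ⟨⟨c, -, hc⟩, ⟨d, -, hd⟩⟩ :=
    hsplit.1.2 _ trivial hpn0 ((s₁ : R) * (s₂ : R)) n (σ * τ) (r • v) f1 f2
  rw [smul_eq_mul] at hc hd
  have hdS : d ∈ S := (hS.2.2 d _ (hd ▸ hS.2.1 _ hσ _ hτ)).1
  have hrS' : r ∈ S' := (hS'.2.2 σ r (har ▸ ha)).2
  have hnv : n = (d * r) • v := by
    apply smul_cancel' hZM hpS
    rw [key, har, hwv, smul_smul, smul_smul]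
    congr 1
    linear_combination r * hd
  refine ⟨v, τ, s₂, d * r, hτ, hS'.2.1 d (hSS' hdS) r hrS', hv, ?_, hnv, by rw [hwv]⟩
  intro h0
  exact hn0 (by rw [hnv, h0, smul_zero])

/-- the unit extraction for the backward very strong case. -/
lemma vsUnit (hS : Saturated S) (hS' : Saturated S') (hSS' : S ⊆ S')
    (hsplit : Splits S (Set.univ : Set M)) (hZM : S ∩ ZDiv R M = ∅)
    (hcompact : CompactlySAtomic S (S' \ AnnSet R M))
    {n : M} (hn : SPrimitive S n) (hn' : SVeryStronglyPrimitive S' n) (hn0 : n ≠ 0)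
    {v : M} {τ : R} {s₂ : hS.submonoid} {e : R}
    (hτ : τ ∈ S) (he : e ∈ S') (hv : SPrimitive S v) (hv0 : v ≠ 0) (hnv : n = e • v)
    {b : R} {s₃ : hS.submonoid} (hb : b ∈ S')
    (hEq : LocalizedModule.mk (τ • v) s₂ =
      Localization.mk b s₃ • LocalizedModule.mk n 1) :
    IsUnit (Localization.mk b s₃) := by
  rw [LocalizedModule.mk_smul_mk, mk_eq_iff' hS hZM] at hEq
  have key : ((s₃ : R) * τ) • v = ((s₂ : R) * b) • n := by
    have h1 : ((s₃ : R) * 1) • (τ • v) = (s₂ : R) • (b • n) := by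
      simpa [Submonoid.coe_mul] using hEq
    rw [smul_smul, smul_smul] at h1
    calc ((s₃ : R) * τ) • v = ((s₃ : R) * 1 * τ) • v := by rw [mul_one]
      _ = ((s₂ : R) * b) • n := h1
  have hs₃τ : (s₃ : R) * τ ∈ S := hS.2.1 _ s₃.2 _ hτ
  have hlhs0 : ((s₃ : R) * τ) • v ≠ 0 := fun h0 => hv0 (reg_of_disjoint hZM hs₃τ h0)
  have hbn0 : b • n ≠ 0 := by
    intro h0
    apply hlhs0
    rw [key, mul_smul, h0, smul_zero]
  have hbAnn : b ∉ AnnSet R M := fun hA => hbn0 (hA n)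
  have hb0 : b ≠ 0 := by rintro rfl; exact hbn0 (zero_smul R n)
  obtain ⟨σ', r', hσ', hr', hbr⟩ := hcompact b ⟨hb, hbAnn⟩ hb0
  rw [smul_eq_mul] at hbr
  have hr'n0 : r' • n ≠ 0 := fun h0 => hbn0 (by rw [hbr, mul_smul, h0, smul_zero])
  have hr'n : SPrimitive S (r' • n) := hsplit.2 r' hr' n hn hr'n0 trivial
  have f1 : IsCompactFactorization S (((s₃ : R) * τ) • v) ((s₃ : R) * τ) v :=
    ⟨hs₃τ, hv, rfl⟩
  have f2 : IsCompactFactorization S (((s₃ : R) * τ) • v) ((s₂ : R) * σ') (r' • n) := by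
    refine ⟨hS.2.1 _ s₂.2 _ hσ', hr'n, ?_⟩
    rw [key, hbr, smul_smul]
    congr 1; ring
  obtain ⟨-, ⟨c₂, -, hc₂⟩⟩ :=
    hsplit.1.2 _ trivial hlhs0 ((s₃ : R) * τ) v ((s₂ : R) * σ') (r' • n) f1 f2
  rw [smul_eq_mul] at hc₂
  have hc₂S : c₂ ∈ S := (hS.2.2 c₂ _ (hc₂ ▸ hS.2.1 _ s₂.2 _ hσ')).1
  have hr'S' : r' ∈ S' := (hS'.2.2 σ' r' (hbr ▸ hb)).2
  have hvrn : v = (c₂ * r') • n := by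
    apply smul_cancel' hZM hs₃τ
    rw [key, smul_smul]
    congr 1
    linear_combination (s₂ : R) * hbr + r' * hc₂
  have hnn : n = (e * (c₂ * r')) • n := by
    rw [mul_smul, ← hvrn]; exact hnv
  have hmem : e * (c₂ * r') ∈ S' := hS'.2.1 e he _ (hS'.2.1 c₂ (hSS' hc₂S) r' hr'S')
  have hvs := hn' _ hmem n hnn
  rcases hvs.2 with ⟨h0, -⟩ | hAll
  · exact absurd h0 hn0
  · have hU : IsUnit (e * (c₂ * r')) := hAll _ hmem hnn
    have hr'U : IsUnit r' := by
      have : IsUnit ((e * c₂) * r') := by rwa [mul_assoc]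
      exact isUnit_of_mul_isUnit_right this
    have hsplitb : Localization.mk b s₃ = Localization.mk σ' s₃ * Localization.mk r' 1 := by
      rw [Localization.mk_mul, mul_one, ← hbr]
    rw [hsplitb]
    exact (isUnit_mk_of_mem hS hσ' s₃).mul (isUnit_mk_one_of_isUnit hS hr'U)

section Directions

variable (hS : Saturated S) (hS' : Saturated S') (hSS' : S ⊆ S')
  (hsplit : Splits S (Set.univ : Set M)) (hZM : S ∩ ZDiv R M = ∅)
  (hcompact : CompactlySAtomic S (S' \ AnnSet R M))
  {n : M} (hn : SPrimitive S n) (hn0 : n ≠ 0)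

include hS hS' hSS' hsplit hZM hcompact hn hn0

lemma fwd0 (h : SPrimitive (locT hS S') (LocalizedModule.mk n (1 : hS.submonoid))) : SPrimitive S' n := by
  intro a' ha' w hw
  have hw0 : w ≠ 0 := by rintro rfl; rw [smul_zero] at hw; exact hn0 hw
  have hmk : LocalizedModule.mk n (1 : hS.submonoid) =
      Localization.mk a' (1 : hS.submonoid) • LocalizedModule.mk w (1 : hS.submonoid) := by
    rw [mk1_smul_mk1 hS, ← hw]
  obtain ⟨⟨t₁, ht₁, he₁⟩, -⟩ := h _ ⟨a', ha', 1, rfl⟩ _ hmk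
  obtain ⟨a, haS', s₁, rfl⟩ := ht₁
  rw [LocalizedModule.mk_smul_mk, mk_eq_iff' hS hZM] at he₁
  have key : (s₁ : R) • w = a • n := by simpa [Submonoid.coe_mul] using he₁
  obtain ⟨e, heS', -, hwe⟩ := lemA hS hS' hSS' hsplit hZM hcompact hn s₁.2 haS' hw0 key
  exact ⟨⟨e, heS', hwe⟩, ⟨a', ha', hw⟩⟩

lemma fwd1 (h : SStronglyPrimitive (locT hS S') (LocalizedModule.mk n (1 : hS.submonoid))) :
    SStronglyPrimitive S' n := by
  intro a' ha' w hw
  have hw0 : w ≠ 0 := by rintro rfl; rw [smul_zero] at hw; exact hn0 hw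
  have hmk : LocalizedModule.mk n (1 : hS.submonoid) =
      Localization.mk a' (1 : hS.submonoid) • LocalizedModule.mk w (1 : hS.submonoid) := by
    rw [mk1_smul_mk1 hS, ← hw]
  obtain ⟨u, huU, huT, he₁⟩ := h _ ⟨a', ha', 1, rfl⟩ _ hmk
  obtain ⟨a, haS', s₁, rfl⟩ := huT
  have haS : a ∈ S := mem_of_isUnit_mk hS huU
  rw [LocalizedModule.mk_smul_mk, mk_eq_iff' hS hZM] at he₁
  have key : (s₁ : R) • w = a • n := by simpa [Submonoid.coe_mul] using he₁
  obtain ⟨e, heS', hae, hwe⟩ := lemA hS hS' hSS' hsplit hZM hcompact hn s₁.2 haS' hw0 key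
  have heS : e ∈ S := (hS.2.2 _ e (hae ▸ haS)).2
  have hnn : n = (e * a') • n := by
    nth_rewrite 1 [hw]
    rw [hwe, smul_smul, mul_comm]
  exact ⟨e, key_unit hS hsplit hn hn0 a' heS hnn, hSS' heS, hwe⟩

lemma fwd2 (h : SVeryStronglyPrimitive (locT hS S') (LocalizedModule.mk n (1 : hS.submonoid))) :
    SVeryStronglyPrimitive S' n := by
  intro a' ha' w hw
  have hw0 : w ≠ 0 := by rintro rfl; rw [smul_zero] at hw; exact hn0 hw
  have hmk : LocalizedModule.mk n (1 : hS.submonoid) =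
      Localization.mk a' (1 : hS.submonoid) • LocalizedModule.mk w (1 : hS.submonoid) := by
    rw [mk1_smul_mk1 hS, ← hw]
  have hvs := h _ ⟨a', ha', 1, rfl⟩ _ hmk
  obtain ⟨⟨t₁, ht₁, he₁⟩, -⟩ := hvs.1
  obtain ⟨a, haS', s₁, rfl⟩ := ht₁
  rw [LocalizedModule.mk_smul_mk, mk_eq_iff' hS hZM] at he₁
  have key : (s₁ : R) • w = a • n := by simpa [Submonoid.coe_mul] using he₁
  obtain ⟨e, heS', -, hwe⟩ := lemA hS hS' hSS' hsplit hZM hcompact hn s₁.2 haS' hw0 key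
  refine ⟨⟨⟨e, heS', hwe⟩, ⟨a', ha', hw⟩⟩, Or.inr ?_⟩
  intro t htS' hwt
  have hmk2 : LocalizedModule.mk w (1 : hS.submonoid) =
      Localization.mk t (1 : hS.submonoid) • LocalizedModule.mk n (1 : hS.submonoid) := by
    rw [mk1_smul_mk1 hS, ← hwt]
  rcases hvs.2 with ⟨-, h0⟩ | hAll
  · exact absurd h0 (mk_one_ne_zero hS hZM hn0)
  · have hUt : IsUnit (Localization.mk t (1 : hS.submonoid)) :=
      hAll _ ⟨t, htS', 1, rfl⟩ hmk2
    have htS : t ∈ S := mem_of_isUnit_mk hS hUt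
    have hnn : n = (t * a') • n := by
      nth_rewrite 1 [hw]
      rw [hwt, smul_smul, mul_comm]
    exact key_unit hS hsplit hn hn0 a' htS hnn

lemma bwd0 (h : SPrimitive S' n) :
    SPrimitive (locT hS S') (LocalizedModule.mk n (1 : hS.submonoid)) := by
  intro t ht x hx
  obtain ⟨v, τ, s₂, e, hτ, heS', hv, hv0, hnv, hxv⟩ :=
    backCore hS hS' hSS' hsplit hZM hcompact hn hn0 ht hx
  obtain ⟨⟨α, hα, hvα⟩, ⟨β, hβ, hnβ⟩⟩ := h e heS' v hnv
  constructor
  · refine ⟨Localization.mk (τ * α) s₂, ⟨τ * α, hS'.2.1 τ (hSS' hτ) α hα, s₂, rfl⟩, ?_⟩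
    rw [hxv, LocalizedModule.mk_smul_mk, mk_eq_iff' hS hZM, hvα]
    match_scalars
    ring
  · refine ⟨Localization.mk ((s₂ : R) * β) ⟨τ, hτ⟩,
      ⟨(s₂ : R) * β, hS'.2.1 _ (hSS' s₂.2) β hβ, ⟨τ, hτ⟩, rfl⟩, ?_⟩
    rw [hxv, LocalizedModule.mk_smul_mk, mk_eq_iff' hS hZM, hnβ]
    match_scalars
    ring

lemma bwd1 (h : SStronglyPrimitive S' n) :
    SStronglyPrimitive (locT hS S') (LocalizedModule.mk n (1 : hS.submonoid)) := by
  intro t ht x hx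
  obtain ⟨v, τ, s₂, e, hτ, heS', hv, hv0, hnv, hxv⟩ :=
    backCore hS hS' hSS' hsplit hZM hcompact hn hn0 ht hx
  obtain ⟨u, huU, huS', hvu⟩ := h e heS' v hnv
  refine ⟨Localization.mk (τ * u) s₂, ?_, ⟨τ * u, hS'.2.1 τ (hSS' hτ) u huS', s₂, rfl⟩, ?_⟩
  · have hsplitm : Localization.mk (τ * u) s₂ =
        Localization.mk τ s₂ * Localization.mk u 1 := by
      rw [Localization.mk_mul, mul_one]
    rw [hsplitm]
    exact (isUnit_mk_of_mem hS hτ s₂).mul (isUnit_mk_one_of_isUnit hS huU)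
  · rw [hxv, LocalizedModule.mk_smul_mk, mk_eq_iff' hS hZM, hvu]
    match_scalars
    ring

lemma bwd2 (h : SVeryStronglyPrimitive S' n) :
    SVeryStronglyPrimitive (locT hS S') (LocalizedModule.mk n (1 : hS.submonoid)) := by
  intro t ht x hx
  obtain ⟨v, τ, s₂, e, hτ, heS', hv, hv0, hnv, hxv⟩ :=
    backCore hS hS' hSS' hsplit hZM hcompact hn hn0 ht hx
  obtain ⟨⟨α, hα, hvα⟩, ⟨β, hβ, hnβ⟩⟩ := (h e heS' v hnv).1
  constructor
  · constructor
    · refine ⟨Localization.mk (τ * α) s₂, ⟨τ * α, hS'.2.1 τ (hSS' hτ) α hα, s₂, rfl⟩, ?_⟩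
      rw [hxv, LocalizedModule.mk_smul_mk, mk_eq_iff' hS hZM, hvα]
      match_scalars
      ring
    · refine ⟨Localization.mk ((s₂ : R) * β) ⟨τ, hτ⟩,
        ⟨(s₂ : R) * β, hS'.2.1 _ (hSS' s₂.2) β hβ, ⟨τ, hτ⟩, rfl⟩, ?_⟩
      rw [hxv, LocalizedModule.mk_smul_mk, mk_eq_iff' hS hZM, hnβ]
      match_scalars
      ring
  · refine Or.inr ?_
    intro t' ht' hxt'
    obtain ⟨b, hb, s₃, rfl⟩ := ht'
    rw [hxv] at hxt'
    exact vsUnit hS hS' hSS' hsplit hZM hcompact hn h hn0 hτ heS' hv hv0 hnv hb hxt'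

end Directions

/-- transfer of the primitivity notions along multiplication by a unit. -/
lemma primOf_smul_unit_mono {A : Type*} [CommRing A] {N : Type*} [AddCommGroup N]
    [Module A N] (T : Set A) (k : Fin 3) (u : Aˣ) {y : N} (h : PrimOf T k y) :
    PrimOf T k ((u : A) • y) := by
  have aux : ∀ z : N, z = (u : A) • (((u⁻¹ : Aˣ) : A) • z) := fun z => by
    rw [smul_smul, Units.mul_inv, one_smul]
  fin_cases k
  · intro t ht z hz
    have hy' : y = t • (((u⁻¹ : Aˣ) : A) • z) := by
      have h1 : y = ((u⁻¹ : Aˣ) : A) • (t • z) := by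
        rw [← hz, smul_smul, Units.inv_mul, one_smul]
      rw [h1, smul_comm]
    obtain ⟨⟨t₁, ht₁, h₁⟩, ⟨t₂, ht₂, h₂⟩⟩ := h t ht _ hy'
    refine ⟨⟨t₁, ht₁, ?_⟩, ⟨t₂, ht₂, ?_⟩⟩
    · rw [aux z, h₁, smul_smul, smul_smul, mul_comm]
    · have hc : ((u : A) * t₂) * ((u⁻¹ : Aˣ) : A) = t₂ := by
        rw [mul_comm (u : A) t₂, mul_assoc, Units.mul_inv, mul_one]
      rw [h₂, smul_smul, smul_smul, hc]
  · intro t ht z hz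
    have hy' : y = t • (((u⁻¹ : Aˣ) : A) • z) := by
      have h1 : y = ((u⁻¹ : Aˣ) : A) • (t • z) := by
        rw [← hz, smul_smul, Units.inv_mul, one_smul]
      rw [h1, smul_comm]
    obtain ⟨w, hwU, hwT, h₁⟩ := h t ht _ hy'
    refine ⟨w, hwU, hwT, ?_⟩
    rw [aux z, h₁, smul_smul, smul_smul, mul_comm]
  · intro t ht z hz
    have hy' : y = t • (((u⁻¹ : Aˣ) : A) • z) := by
      have h1 : y = ((u⁻¹ : Aˣ) : A) • (t • z) := by
        rw [← hz, smul_smul, Units.inv_mul, one_smul]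
      rw [h1, smul_comm]
    obtain ⟨⟨⟨t₁, ht₁, h₁⟩, ⟨t₂, ht₂, h₂⟩⟩, hd⟩ := h t ht _ hy'
    constructor
    · refine ⟨⟨t₁, ht₁, ?_⟩, ⟨t₂, ht₂, ?_⟩⟩
      · rw [aux z, h₁, smul_smul, smul_smul, mul_comm]
      · have hc : ((u : A) * t₂) * ((u⁻¹ : Aˣ) : A) = t₂ := by
          rw [mul_comm (u : A) t₂, mul_assoc, Units.mul_inv, mul_one]
        rw [h₂, smul_smul, smul_smul, hc]
    · rcases hd with ⟨hz0, hy0⟩ | hAll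
      · exact Or.inl ⟨by rw [aux z, hz0, smul_zero], by rw [hy0, smul_zero]⟩
      · refine Or.inr fun t' ht' hEq => hAll t' ht' ?_
        rw [hEq, smul_smul, smul_smul]
        congr 1
        rw [mul_comm ((u⁻¹ : Aˣ) : A), mul_assoc, Units.inv_mul, mul_one]

lemma primOf_smul_unit_iff {A : Type*} [CommRing A] {N : Type*} [AddCommGroup N]
    [Module A N] (T : Set A) (k : Fin 3) (u : Aˣ) (y : N) :
    PrimOf T k ((u : A) • y) ↔ PrimOf T k y := by
  constructor
  · intro hx
    have h2 := primOf_smul_unit_mono T k u⁻¹ hx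
    rwa [smul_smul, Units.inv_mul, one_smul] at h2
  · exact primOf_smul_unit_mono T k u

end Statement7Aux

theorem statement7 {R : Type*} [CommRing R] {M : Type*} [AddCommGroup M] [Module R M]
    [Nontrivial M] (S S' : Set R) (hS : Saturated S) (hS' : Saturated S') (hSS' : S ⊆ S')
    (hsplit : Splits S (Set.univ : Set M)) (hZM : S ∩ ZDiv R M = ∅)
    (hcompact : CompactlySAtomic S (S' \ AnnSet R M))
    (m : M) (hm : m ≠ 0) (kβ : Fin 3) (s : R) (n : M)
    (hfac : IsCompactFactorization S m s n) :
    PrimOf (locT hS S') kβ (LocalizedModule.mkLinearMap hS.submonoid M m) ↔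
      PrimOf S' kβ n := by
  obtain ⟨hsS, hnprim, hmsn⟩ := hfac
  have hn0 : n ≠ 0 := by rintro rfl; rw [smul_zero] at hmsn; exact hm hmsn
  obtain ⟨u, hu⟩ := isUnit_mk_of_mem hS hsS 1
  have hmk : (LocalizedModule.mkLinearMap hS.submonoid M) m =
      (u : Localization hS.submonoid) • LocalizedModule.mk n 1 := by
    rw [hu, mk1_smul_mk1 hS]
    show LocalizedModule.mk m 1 = LocalizedModule.mk (s • n) 1
    rw [hmsn]
  rw [hmk, primOf_smul_unit_iff (locT hS S') kβ u (LocalizedModule.mk n 1)]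
  fin_cases kβ
  · exact ⟨fun h => fwd0 hS hS' hSS' hsplit hZM hcompact hnprim hn0 h,
      fun h => bwd0 hS hS' hSS' hsplit hZM hcompact hnprim hn0 h⟩
  · exact ⟨fun h => fwd1 hS hS' hSS' hsplit hZM hcompact hnprim hn0 h,
      fun h => bwd1 hS hS' hSS' hsplit hZM hcompact hnprim hn0 h⟩
  · exact ⟨fun h => fwd2 hS hS' hSS' hsplit hZM hcompact hnprim hn0 h,
      fun h => bwd2 hS hS' hSS' hsplit hZM hcompact hnprim hn0 h⟩

end FactorizationPaper
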